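/- Suppose the perturbed reduced order blended dynamics ṡ̄ = (1/N)∑_i F_i(t, s̄ + e_i, z̄ + d_i), ż̄ = Z(t, z̄, s̄ + e_0) with input (e_0, e_1, ..., e_N, d_1, ..., d_N) is δ-ISS with (β, γ̂), and that α(s) := s − γ̂(2s) is a class-𝒦_∞ function. Then the perturbed blended dynamics ṡ = (1/N)∑_i F_i(t, s + e_i, z_i), ż_i = Z(t, z_i, s + e_i) with input (e_1, ..., e_N) is δ-ISS. -/

import Mathlib

open Filter

def ClassKinf (γ : ℝ → ℝ) : Prop :=
  ContinuousOn γ (Set.Ici 0) ∧ StrictMonoOn γ (Set.Ici 0) ∧ γ 0 = 0 ∧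
    Tendsto γ atTop atTop

def ClassKL (β : ℝ → ℝ → ℝ) : Prop :=
  (∀ t ∈ Set.Ici (0 : ℝ), ContinuousOn (fun r => β r t) (Set.Ici 0) ∧
      StrictMonoOn (fun r => β r t) (Set.Ici 0) ∧ β 0 t = 0) ∧
  (∀ r > (0 : ℝ), AntitoneOn (β r) (Set.Ici 0) ∧ Tendsto (β r) atTop (nhds 0)) ∧
  (∀ r ≥ (0 : ℝ), ∀ t ≥ (0 : ℝ), 0 ≤ β r t)



open Set

set_option autoImplicit false

noncomputable def abar (γh : ℝ → ℝ) : ℝ → ℝ := fun s => s - γh (2 * max s 0)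

section GH
variable {γh : ℝ → ℝ} {β : ℝ → ℝ → ℝ}

lemma gh_zero (hγ : ClassKinf γh) : γh 0 = 0 := hγ.2.2.1

lemma gh_mono (hγ : ClassKinf γh) {a b : ℝ} (ha : 0 ≤ a) (hab : a ≤ b) :
    γh a ≤ γh b :=
  hγ.2.1.monotoneOn (mem_Ici.2 ha) (mem_Ici.2 (ha.trans hab)) hab

lemma gh_nonneg (hγ : ClassKinf γh) {s : ℝ} (hs : 0 ≤ s) : 0 ≤ γh s := by
  have h := gh_mono hγ le_rfl hs
  rwa [gh_zero hγ] at h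

-- β basics
lemma beta_nonneg (hβ : ClassKL β) {r t : ℝ} (hr : 0 ≤ r) (ht : 0 ≤ t) : 0 ≤ β r t :=
  hβ.2.2 r hr t ht

lemma beta_zero (hβ : ClassKL β) {t : ℝ} (ht : 0 ≤ t) : β 0 t = 0 := (hβ.1 t ht).2.2

lemma beta_mono_r (hβ : ClassKL β) {t a b : ℝ} (ht : 0 ≤ t) (ha : 0 ≤ a) (hab : a ≤ b) :
    β a t ≤ β b t :=
  (hβ.1 t ht).2.1.monotoneOn (mem_Ici.2 ha) (mem_Ici.2 (ha.trans hab)) hab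

lemma beta_le_beta_zero (hβ : ClassKL β) {r t : ℝ} (hr : 0 ≤ r) (ht : 0 ≤ t) :
    β r t ≤ β r 0 := by
  rcases eq_or_lt_of_le hr with he | hlt
  · rw [← he, beta_zero hβ ht, beta_zero hβ le_rfl]
  · exact (hβ.2.1 r hlt).1 (mem_Ici.2 le_rfl) (mem_Ici.2 ht) ht

-- abar basics
lemma abar_zero (hγ : ClassKinf γh) : abar γh 0 = 0 := by
  simp [abar, gh_zero hγ]

lemma abar_of_nonneg {s : ℝ} (hs : 0 ≤ s) : abar γh s = s - γh (2 * s) := by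
  rw [abar, max_eq_left hs]

lemma abar_of_nonpos (hγ : ClassKinf γh) {s : ℝ} (hs : s ≤ 0) : abar γh s = s := by
  rw [abar, max_eq_right hs, mul_zero, gh_zero hγ, sub_zero]

lemma abar_cont (hγ : ClassKinf γh) : Continuous (abar γh) := by
  have h2 : Continuous fun s : ℝ => 2 * max s 0 := by continuity
  have := hγ.1.comp_continuous h2 (fun s => mem_Ici.2 (by positivity))
  exact continuous_id.sub this

lemma abar_strictMono (hγ : ClassKinf γh) (hα : ClassKinf (fun s => s - γh (2 * s))) :
    StrictMono (abar γh) := by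
  intro s t hst
  rcases le_or_gt 0 s with hs | hs
  · have ht : 0 ≤ t := hs.trans hst.le
    rw [abar_of_nonneg hs, abar_of_nonneg ht]
    exact hα.2.1 (mem_Ici.2 hs) (mem_Ici.2 ht) hst
  · rcases le_or_gt 0 t with ht | ht
    · have h1 : abar γh s = s := abar_of_nonpos hγ hs.le
      have h2 : 0 ≤ abar γh t := by
        rw [abar_of_nonneg ht]
        have h := hα.2.1.monotoneOn (mem_Ici.2 le_rfl) (mem_Ici.2 ht) ht
        simp only [mul_zero, gh_zero hγ, sub_zero] at h
        simpa using h
      linarith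
    · rw [abar_of_nonpos hγ hs.le, abar_of_nonpos hγ ht.le]
      exact hst

lemma abar_nonneg (hγ : ClassKinf γh) (hα : ClassKinf (fun s => s - γh (2 * s)))
    {s : ℝ} (hs : 0 ≤ s) : 0 ≤ abar γh s := by
  have := (abar_strictMono hγ hα).monotone hs
  rwa [abar_zero hγ] at this

lemma abar_pos (hγ : ClassKinf γh) (hα : ClassKinf (fun s => s - γh (2 * s)))
    {s : ℝ} (hs : 0 < s) : 0 < abar γh s := by
  have := (abar_strictMono hγ hα) hs
  rwa [abar_zero hγ] at this

lemma abar_le_self (hγ : ClassKinf γh) {s : ℝ} (hs : 0 ≤ s) : abar γh s ≤ s := by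
  have h : 0 ≤ γh (2 * max s 0) := gh_nonneg hγ (by positivity)
  rw [abar]; linarith

lemma gh_two_eq (hγ : ClassKinf γh) {s : ℝ} (hs : 0 ≤ s) :
    γh (2 * s) = s - abar γh s := by
  rw [abar_of_nonneg hs]; ring

lemma abar_tendsto_atTop (hγ : ClassKinf γh) (hα : ClassKinf (fun s => s - γh (2 * s))) :
    Tendsto (abar γh) atTop atTop := by
  refine Tendsto.congr' ?_ hα.2.2.2
  filter_upwards [eventually_ge_atTop (0:ℝ)] with s hs
  rw [abar_of_nonneg hs]

lemma abar_tendsto_atBot (hγ : ClassKinf γh) : Tendsto (abar γh) atBot atBot := by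
  have : Tendsto (fun s : ℝ => s) atBot atBot := tendsto_id
  refine Tendsto.congr' ?_ this
  filter_upwards [eventually_le_atBot (0:ℝ)] with s hs
  rw [abar_of_nonpos hγ hs]

lemma exists_aI (hγ : ClassKinf γh) (hα : ClassKinf (fun s => s - γh (2 * s))) :
    ∃ aI : ℝ → ℝ, Monotone aI ∧ Continuous aI ∧ aI 0 = 0 ∧
      ∀ x c : ℝ, 0 ≤ x → abar γh x ≤ c → x ≤ aI c := by
  have hsm : StrictMono (abar γh) := abar_strictMono hγ hα
  have hsurj : Function.Surjective (abar γh) :=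
    (abar_cont hγ).surjective (abar_tendsto_atTop hγ hα) (abar_tendsto_atBot hγ)
  set e := StrictMono.orderIsoOfSurjective _ hsm hsurj with he
  have hcoe : ∀ s, e s = abar γh s := fun s => rfl
  refine ⟨fun c => e.symm c, fun a b hab => e.symm.monotone hab, e.symm.continuous, ?_, ?_⟩
  · have h0 : e 0 = 0 := by rw [hcoe, abar_zero hγ]
    have h1 : e.symm (e 0) = 0 := e.symm_apply_apply 0
    rw [h0] at h1
    exact h1
  · intro x c hx h
    have : e x ≤ c := by rw [hcoe]; exact h
    simpa using e.symm.monotone this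

lemma exists_D (hβ : ClassKL β) (hγ : ClassKinf γh)
    (hα : ClassKinf (fun s => s - γh (2 * s))) :
    ∃ D : ℝ → ℝ, (∀ b, 1 ≤ D b) ∧ ∀ b, 0 ≤ b → β b (D b) ≤ abar γh b / 2 := by
  have h : ∀ b : ℝ, ∃ d : ℝ, 1 ≤ d ∧ (0 ≤ b → β b d ≤ abar γh b / 2) := by
    intro b
    rcases lt_or_ge b 0 with hb | hb
    · exact ⟨1, le_rfl, fun h => absurd h (not_le.2 hb)⟩
    rcases eq_or_lt_of_le hb with he | hlt
    · refine ⟨1, le_rfl, fun _ => ?_⟩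
      rw [← he, beta_zero hβ zero_le_one, abar_zero hγ]
      norm_num
    · have htd := (hβ.2.1 b hlt).2
      have hpos : 0 < abar γh b / 2 := by have := abar_pos hγ hα hlt; linarith
      have hev : ∀ᶠ d in atTop, β b d < abar γh b / 2 :=
        htd.eventually_lt_const hpos
      obtain ⟨d, hd1, hd2⟩ := (hev.and (eventually_ge_atTop (1:ℝ))).exists
      exact ⟨d, hd2, fun _ => hd1.le⟩
  choose Df h1 h2 using h
  exact ⟨Df, h1, h2⟩

end GH
noncomputable def gstep (γh : ℝ → ℝ) : ℝ → ℝ := fun s => s - abar γh s / 2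

noncomputable def bseq (γh : ℝ → ℝ) (m : ℝ) : ℕ → ℝ := fun k => (gstep γh)^[k] m

noncomputable def Tseq (γh D : ℝ → ℝ) (m : ℝ) : ℕ → ℝ :=
  fun k => ∑ j ∈ Finset.range k, D (bseq γh m j)

open scoped Classical in
noncomputable def Kf (γh D : ℝ → ℝ) (m τ : ℝ) : ℕ :=
  Nat.findGreatest (fun k => Tseq γh D m k ≤ τ) ⌈τ⌉₊

noncomputable def omf (γh D : ℝ → ℝ) (m τ : ℝ) : ℝ := bseq γh m (Kf γh D m τ)

noncomputable def b0f (β : ℝ → ℝ → ℝ) (aI : ℝ → ℝ) (r : ℝ) : ℝ :=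
  max (aI (β r 0)) (2 * β r 0)

noncomputable def ombar (γh D : ℝ → ℝ) (β : ℝ → ℝ → ℝ) (aI : ℝ → ℝ) : ℕ → ℝ → ℝ
  | 0 => omf γh D (b0f β aI 0)
  | (n+1) => fun τ => max (ombar γh D β aI n τ) (omf γh D (b0f β aI ((n : ℝ) + 1)) τ)

noncomputable def stepf (γh D : ℝ → ℝ) (β : ℝ → ℝ → ℝ) (aI : ℝ → ℝ) (t u : ℝ) : ℝ :=
  ombar γh D β aI (⌊u⌋₊ + 2) t

noncomputable def beta0 (γh D : ℝ → ℝ) (β : ℝ → ℝ → ℝ) (aI : ℝ → ℝ) (r t : ℝ) : ℝ :=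
  ∫ u in r..(r+1), stepf γh D β aI t u

noncomputable def betaP (γh D : ℝ → ℝ) (β : ℝ → ℝ → ℝ) (aI : ℝ → ℝ) (r t : ℝ) : ℝ :=
  β r t + min (b0f β aI r) (beta0 γh D β aI r t) + r * Real.exp (-t)

noncomputable def gamP (γh : ℝ → ℝ) : ℝ → ℝ := fun s => s / 2 + 2 * γh s

section SEQ

variable {γh D : ℝ → ℝ} {β : ℝ → ℝ → ℝ} {aI : ℝ → ℝ}

lemma gstep_cont (hγ : ClassKinf γh) : Continuous (gstep γh) :=
  continuous_id.sub ((abar_cont hγ).div_const 2)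

lemma gstep_nonneg (hγ : ClassKinf γh) {s : ℝ} (hs : 0 ≤ s) : 0 ≤ gstep γh s := by
  have := abar_le_self hγ hs
  show 0 ≤ s - abar γh s / 2
  linarith

lemma gstep_le_self (hγ : ClassKinf γh) (hα : ClassKinf (fun s => s - γh (2 * s)))
    {s : ℝ} (hs : 0 ≤ s) : gstep γh s ≤ s := by
  have := abar_nonneg hγ hα hs
  show s - abar γh s / 2 ≤ s
  linarith

lemma bseq_zero (m : ℝ) : bseq γh m 0 = m := rfl

lemma bseq_succ (m : ℝ) (k : ℕ) : bseq γh m (k+1) = gstep γh (bseq γh m k) :=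
  Function.iterate_succ_apply' _ _ _

lemma bseq_nonneg (hγ : ClassKinf γh) {m : ℝ} (hm : 0 ≤ m) (k : ℕ) :
    0 ≤ bseq γh m k := by
  induction k with
  | zero => exact hm
  | succ k ih => rw [bseq_succ]; exact gstep_nonneg hγ ih

lemma bseq_antitone (hγ : ClassKinf γh) (hα : ClassKinf (fun s => s - γh (2 * s)))
    {m : ℝ} (hm : 0 ≤ m) : Antitone (bseq γh m) := by
  apply antitone_nat_of_succ_le
  intro k
  rw [bseq_succ]
  exact gstep_le_self hγ hα (bseq_nonneg hγ hm k)

lemma bseq_tendsto (hγ : ClassKinf γh) (hα : ClassKinf (fun s => s - γh (2 * s)))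
    {m : ℝ} (hm : 0 ≤ m) : Tendsto (bseq γh m) atTop (nhds 0) := by
  have hanti := bseq_antitone hγ hα hm
  have hbdd : BddBelow (Set.range (bseq γh m)) := by
    refine ⟨0, ?_⟩
    rintro y ⟨k, rfl⟩
    exact bseq_nonneg hγ hm k
  have htend := tendsto_atTop_ciInf hanti hbdd
  set L := ⨅ k, bseq γh m k with hL
  have h1 : Tendsto (fun k => bseq γh m (k+1)) atTop (nhds L) :=
    htend.comp (tendsto_add_atTop_nat 1)
  have h2 : Tendsto (fun k => gstep γh (bseq γh m k)) atTop (nhds (gstep γh L)) :=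
    ((gstep_cont hγ).tendsto L).comp htend
  have h3 : (fun k => bseq γh m (k+1)) = fun k => gstep γh (bseq γh m k) :=
    funext fun k => bseq_succ m k
  have h4 : gstep γh L = L := tendsto_nhds_unique h2 (h3 ▸ h1)
  have h5 : abar γh L = 0 := by
    have h4' : L - abar γh L / 2 = L := h4
    linarith
  have h6 : L = 0 := (abar_strictMono hγ hα).injective (h5.trans (abar_zero hγ).symm)
  rwa [h6] at htend

lemma Tseq_zero (m : ℝ) : Tseq γh D m 0 = 0 := by simp [Tseq]

lemma Tseq_succ (m : ℝ) (k : ℕ) :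
    Tseq γh D m (k+1) = Tseq γh D m k + D (bseq γh m k) :=
  Finset.sum_range_succ _ _

lemma Tseq_ge_nat (hD1 : ∀ b, 1 ≤ D b) (m : ℝ) (k : ℕ) : (k : ℝ) ≤ Tseq γh D m k := by
  induction k with
  | zero => simp [Tseq_zero]
  | succ k ih =>
    rw [Tseq_succ]
    push_cast
    have := hD1 (bseq γh m k)
    linarith

lemma Tseq_nonneg (hD1 : ∀ b, 1 ≤ D b) (m : ℝ) (k : ℕ) : 0 ≤ Tseq γh D m k :=
  le_trans (by positivity) (Tseq_ge_nat hD1 m k)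

lemma Tseq_le_succ (hD1 : ∀ b, 1 ≤ D b) (m : ℝ) (k : ℕ) :
    Tseq γh D m k ≤ Tseq γh D m (k+1) := by
  rw [Tseq_succ]
  have := hD1 (bseq γh m k)
  linarith

lemma Tseq_Kf_le {m τ : ℝ} (hτ : 0 ≤ τ) : Tseq γh D m (Kf γh D m τ) ≤ τ := by
  have h0 : Tseq γh D m 0 ≤ τ := by rw [Tseq_zero]; exact hτ
  unfold Kf
  exact Nat.findGreatest_spec (P := fun k => Tseq γh D m k ≤ τ) (Nat.zero_le _) h0

lemma le_Kf (hD1 : ∀ b, 1 ≤ D b) {m τ : ℝ} {k : ℕ} (h : Tseq γh D m k ≤ τ) :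
    k ≤ Kf γh D m τ := by
  unfold Kf
  refine Nat.le_findGreatest (P := fun k => Tseq γh D m k ≤ τ) ?_ h
  have h1 : (k : ℝ) ≤ τ := le_trans (Tseq_ge_nat hD1 m k) h
  have h2 : (k : ℝ) ≤ (⌈τ⌉₊ : ℝ) := le_trans h1 (Nat.le_ceil τ)
  exact_mod_cast h2

lemma omf_nonneg (hγ : ClassKinf γh) {m : ℝ} (hm : 0 ≤ m) (τ : ℝ) :
    0 ≤ omf γh D m τ := bseq_nonneg hγ hm _

lemma omf_le (hγ : ClassKinf γh) (hα : ClassKinf (fun s => s - γh (2 * s)))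
    {m : ℝ} (hm : 0 ≤ m) (τ : ℝ) : omf γh D m τ ≤ m :=
  bseq_antitone hγ hα hm (Nat.zero_le _)

lemma omf_antitone (hγ : ClassKinf γh) (hα : ClassKinf (fun s => s - γh (2 * s)))
    (hD1 : ∀ b, 1 ≤ D b) {m : ℝ} (hm : 0 ≤ m) : Antitone (omf γh D m) := by
  intro τ1 τ2 h12
  rcases lt_or_ge τ1 0 with h1 | h1
  · have hceil : ⌈τ1⌉₊ = 0 := Nat.ceil_eq_zero.2 h1.le
    have hK : Kf γh D m τ1 = 0 := by
      unfold Kf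
      rw [hceil]
      exact Nat.findGreatest_zero
    have hres : omf γh D m τ1 = m := by unfold omf; rw [hK, bseq_zero]
    rw [hres]
    exact omf_le hγ hα hm τ2
  · have hk : Kf γh D m τ1 ≤ Kf γh D m τ2 :=
      le_Kf hD1 (le_trans (Tseq_Kf_le h1) h12)
    exact bseq_antitone hγ hα hm hk

lemma omf_tendsto (hγ : ClassKinf γh) (hα : ClassKinf (fun s => s - γh (2 * s)))
    (hD1 : ∀ b, 1 ≤ D b) {m : ℝ} (hm : 0 ≤ m) :
    Tendsto (omf γh D m) atTop (nhds 0) := by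
  rw [tendsto_order]
  constructor
  · intro c hc
    exact Eventually.of_forall fun τ => lt_of_lt_of_le hc (omf_nonneg hγ hm τ)
  · intro c hc
    obtain ⟨k, hk⟩ : ∃ k, bseq γh m k < c :=
      ((bseq_tendsto hγ hα hm).eventually (eventually_lt_nhds hc)).exists
    filter_upwards [eventually_ge_atTop (Tseq γh D m k)] with τ hτ
    have hKk : k ≤ Kf γh D m τ := le_Kf hD1 hτ
    exact lt_of_le_of_lt (bseq_antitone hγ hα hm hKk) hk

end SEQ
section ENV

variable {γh D : ℝ → ℝ} {β : ℝ → ℝ → ℝ} {aI : ℝ → ℝ}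

lemma b0f_nonneg (hβ : ClassKL β) {r : ℝ} (hr : 0 ≤ r) : 0 ≤ b0f β aI r := by
  have h : 0 ≤ 2 * β r 0 := by have := beta_nonneg hβ hr le_rfl; linarith
  exact le_trans h (le_max_right _ _)

lemma b0f_mono (hβ : ClassKL β) (haI : Monotone aI) {a b : ℝ} (ha : 0 ≤ a)
    (hab : a ≤ b) : b0f β aI a ≤ b0f β aI b := by
  have h := beta_mono_r hβ le_rfl ha hab
  exact max_le_max (haI h) (by linarith)

lemma b0f_contOn (hβ : ClassKL β) (haI : Continuous aI) :
    ContinuousOn (b0f β aI) (Ici 0) := by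
  have h1 : ContinuousOn (fun r => β r 0) (Ici 0) := (hβ.1 0 Set.self_mem_Ici).1
  exact (haI.comp_continuousOn h1).sup (continuousOn_const.mul h1)

lemma b0f_zero (hβ : ClassKL β) (haI0 : aI 0 = 0) : b0f β aI 0 = 0 := by
  rw [b0f, beta_zero hβ le_rfl, haI0]
  norm_num

-- ombar
lemma omf_le_ombar (hD1 : ∀ b, 1 ≤ D b) (n : ℕ) (τ : ℝ) :
    omf γh D (b0f β aI (n : ℝ)) τ ≤ ombar γh D β aI n τ := by
  cases n with
  | zero => simp [ombar]
  | succ n =>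
    have : ((n+1 : ℕ) : ℝ) = (n : ℝ) + 1 := by push_cast; ring
    rw [ombar, this]
    exact le_max_right _ _

lemma ombar_le_succ (n : ℕ) (τ : ℝ) :
    ombar γh D β aI n τ ≤ ombar γh D β aI (n+1) τ := le_max_left _ _

lemma ombar_mono_n {n₁ n₂ : ℕ} (h : n₁ ≤ n₂) (τ : ℝ) :
    ombar γh D β aI n₁ τ ≤ ombar γh D β aI n₂ τ := by
  induction n₂ with
  | zero => rw [Nat.le_zero.1 h]
  | succ n ih =>
    rcases Nat.le_succ_iff.1 h with h' | h'
    · exact le_trans (ih h') (ombar_le_succ n τ)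
    · rw [h']

lemma ombar_nonneg (hβ : ClassKL β) (hγ : ClassKinf γh) (n : ℕ) (τ : ℝ) :
    0 ≤ ombar γh D β aI n τ := by
  induction n with
  | zero => exact omf_nonneg hγ (b0f_nonneg hβ le_rfl) τ
  | succ n ih => exact le_trans ih (le_max_left _ _)

lemma ombar_antitone (hβ : ClassKL β) (hγ : ClassKinf γh)
    (hα : ClassKinf (fun s => s - γh (2 * s))) (hD1 : ∀ b, 1 ≤ D b) (n : ℕ) :
    Antitone (ombar γh D β aI n) := by
  induction n with
  | zero => exact omf_antitone hγ hα hD1 (b0f_nonneg hβ le_rfl)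
  | succ n ih =>
    intro τ1 τ2 h12
    exact max_le_max (ih h12)
      (omf_antitone hγ hα hD1 (b0f_nonneg hβ (by positivity)) h12)

lemma ombar_tendsto (hβ : ClassKL β) (hγ : ClassKinf γh)
    (hα : ClassKinf (fun s => s - γh (2 * s))) (hD1 : ∀ b, 1 ≤ D b) (n : ℕ) :
    Tendsto (ombar γh D β aI n) atTop (nhds 0) := by
  induction n with
  | zero => exact omf_tendsto hγ hα hD1 (b0f_nonneg hβ le_rfl)
  | succ n ih =>
    have h2 := omf_tendsto hγ hα hD1 (m := b0f β aI ((n:ℝ)+1)) (b0f_nonneg hβ (by positivity))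
    have := ih.max h2
    rw [max_self] at this; exact this

end ENV
section INTG

variable {γh D : ℝ → ℝ} {β : ℝ → ℝ → ℝ} {aI : ℝ → ℝ}

lemma stepf_mono_u (hβ : ClassKL β) (t : ℝ) : Monotone (stepf γh D β aI t) := by
  intro u v huv
  have h := Nat.floor_mono huv
  exact ombar_mono_n (by omega) t

lemma stepf_nonneg (hβ : ClassKL β) (hγ : ClassKinf γh) (t u : ℝ) :
    0 ≤ stepf γh D β aI t u := ombar_nonneg hβ hγ _ t

lemma stepf_anti_t (hβ : ClassKL β) (hγ : ClassKinf γh)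
    (hα : ClassKinf (fun s => s - γh (2 * s))) (hD1 : ∀ b, 1 ≤ D b) (u : ℝ) :
    Antitone (fun t => stepf γh D β aI t u) :=
  fun _ _ h12 => ombar_antitone hβ hγ hα hD1 _ h12

lemma stepf_intable (hβ : ClassKL β) (t a b : ℝ) :
    IntervalIntegrable (stepf γh D β aI t) MeasureTheory.volume a b :=
  ((stepf_mono_u hβ t).monotoneOn _).intervalIntegrable

lemma beta0_cont_r (hβ : ClassKL β) (t : ℝ) :
    Continuous (fun r => beta0 γh D β aI r t) := by
  have hint : ∀ a b : ℝ, IntervalIntegrable (stepf γh D β aI t) MeasureTheory.volume a b :=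
    stepf_intable hβ t
  have hprim : Continuous (fun y : ℝ => ∫ u in (0:ℝ)..y, stepf γh D β aI t u) :=
    intervalIntegral.continuous_primitive hint 0
  have heq : (fun r => beta0 γh D β aI r t) =
      fun r => (∫ u in (0:ℝ)..(r+1), stepf γh D β aI t u)
        - (∫ u in (0:ℝ)..r, stepf γh D β aI t u) := by
    funext r
    have h := intervalIntegral.integral_add_adjacent_intervals (hint 0 r) (hint r (r+1))
    rw [beta0]
    linarith
  rw [heq]
  exact (hprim.comp (continuous_id.add continuous_const)).sub hprim

lemma beta0_mono_r (hβ : ClassKL β) (t : ℝ) :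
    Monotone (fun r => beta0 γh D β aI r t) := by
  intro a b hab
  have hshift : ∀ c : ℝ, beta0 γh D β aI c t = ∫ v in (0:ℝ)..1, stepf γh D β aI t (v + c) := by
    intro c
    rw [intervalIntegral.integral_comp_add_right (stepf γh D β aI t) c, beta0, zero_add,
      add_comm 1 c]
  simp only [hshift]
  apply intervalIntegral.integral_mono_on zero_le_one
  · exact (((stepf_mono_u hβ t).comp (fun u v h => by dsimp only; linarith : Monotone (fun v : ℝ => v + a))).monotoneOn _).intervalIntegrable
  · exact (((stepf_mono_u hβ t).comp (fun u v h => by dsimp only; linarith : Monotone (fun v : ℝ => v + b))).monotoneOn _).intervalIntegrable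
  · intro v _
    exact stepf_mono_u hβ t (by linarith)

lemma beta0_nonneg (hβ : ClassKL β) (hγ : ClassKinf γh) (r t : ℝ) :
    0 ≤ beta0 γh D β aI r t := by
  apply intervalIntegral.integral_nonneg (by linarith)
  intro u _
  exact stepf_nonneg hβ hγ t u

lemma beta0_lb (hβ : ClassKL β) (r t : ℝ) :
    ombar γh D β aI (⌊r⌋₊ + 2) t ≤ beta0 γh D β aI r t := by
  have h1 : (∫ _ in r..(r+1), stepf γh D β aI t r) = stepf γh D β aI t r := by
    rw [intervalIntegral.integral_const]
    simp
  have h2 : (∫ _ in r..(r+1), stepf γh D β aI t r) ≤ beta0 γh D β aI r t := by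
    apply intervalIntegral.integral_mono_on (by linarith) intervalIntegrable_const
      (stepf_intable hβ t r (r+1))
    intro u hu
    exact stepf_mono_u hβ t hu.1
  rw [h1] at h2
  exact h2

lemma beta0_ub (hβ : ClassKL β) (r t : ℝ) :
    beta0 γh D β aI r t ≤ ombar γh D β aI (⌊r+1⌋₊ + 2) t := by
  have h1 : (∫ _ in r..(r+1), stepf γh D β aI t (r+1)) = stepf γh D β aI t (r+1) := by
    rw [intervalIntegral.integral_const]
    simp
  have h2 : beta0 γh D β aI r t ≤ ∫ _ in r..(r+1), stepf γh D β aI t (r+1) := by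
    apply intervalIntegral.integral_mono_on (by linarith) (stepf_intable hβ t r (r+1))
      intervalIntegrable_const
    intro u hu
    exact stepf_mono_u hβ t hu.2
  rw [h1] at h2
  exact h2

lemma beta0_anti_t (hβ : ClassKL β) (hγ : ClassKinf γh)
    (hα : ClassKinf (fun s => s - γh (2 * s))) (hD1 : ∀ b, 1 ≤ D b) (r : ℝ) :
    Antitone (fun t => beta0 γh D β aI r t) := by
  intro t1 t2 h12
  apply intervalIntegral.integral_mono_on (by linarith : r ≤ r + 1)
    (stepf_intable hβ t2 r (r+1)) (stepf_intable hβ t1 r (r+1))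
  intro u _
  exact stepf_anti_t hβ hγ hα hD1 u h12

lemma beta0_tendsto (hβ : ClassKL β) (hγ : ClassKinf γh)
    (hα : ClassKinf (fun s => s - γh (2 * s))) (hD1 : ∀ b, 1 ≤ D b) (r : ℝ) :
    Tendsto (fun t => beta0 γh D β aI r t) atTop (nhds 0) := by
  apply squeeze_zero (fun t => beta0_nonneg hβ hγ r t) (fun t => beta0_ub hβ r t)
  exact ombar_tendsto hβ hγ hα hD1 _

lemma gamP_classKinf (hγ : ClassKinf γh) : ClassKinf (gamP γh) := by
  refine ⟨?_, ?_, ?_, ?_⟩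
  · exact ((continuous_id.div_const 2).continuousOn).add (continuousOn_const.mul hγ.1)
  · intro a ha b hb hab
    have h1 := hγ.2.1 ha hb hab
    have : a / 2 < b / 2 := by linarith
    simp only [gamP]
    linarith
  · simp [gamP, gh_zero hγ]
  · apply tendsto_atTop_mono' atTop ?_ (tendsto_id.atTop_div_const two_pos)
    filter_upwards [eventually_ge_atTop (0:ℝ)] with s hs
    have := gh_nonneg hγ hs
    simp only [gamP, id]
    linarith

lemma gamP_nonneg (hγ : ClassKinf γh) {s : ℝ} (hs : 0 ≤ s) : 0 ≤ gamP γh s := by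
  have := gh_nonneg hγ hs
  simp only [gamP]
  linarith

lemma gamP_zero (hγ : ClassKinf γh) : gamP γh 0 = 0 := by simp [gamP, gh_zero hγ]

lemma betaP_classKL (hβ : ClassKL β) (hγ : ClassKinf γh)
    (hα : ClassKinf (fun s => s - γh (2 * s))) (hD1 : ∀ b, 1 ≤ D b)
    (haIm : Monotone aI) (haIc : Continuous aI) (haI0 : aI 0 = 0) :
    ClassKL (betaP γh D β aI) := by
  refine ⟨?_, ?_, ?_⟩
  · intro t ht
    have ht' : (0:ℝ) ≤ t := ht
    refine ⟨?_, ?_, ?_⟩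
    · apply ContinuousOn.add
      apply ContinuousOn.add
      · exact (hβ.1 t ht).1
      · exact (b0f_contOn hβ haIc).inf (beta0_cont_r hβ t).continuousOn
      · exact (continuous_id.mul continuous_const).continuousOn
    · intro a ha b hb hab
      have ha' : (0:ℝ) ≤ a := ha
      have h1 : β a t < β b t := (hβ.1 t ht).2.1 ha hb hab
      have h2 : min (b0f β aI a) (beta0 γh D β aI a t)
          ≤ min (b0f β aI b) (beta0 γh D β aI b t) :=
        min_le_min (b0f_mono hβ haIm ha' hab.le) (beta0_mono_r hβ t hab.le)
      have h3 : a * Real.exp (-t) ≤ b * Real.exp (-t) :=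
        mul_le_mul_of_nonneg_right hab.le (Real.exp_pos _).le
      simp only [betaP]
      linarith
    · have h1 : β 0 t = 0 := beta_zero hβ ht'
      have h2 : b0f β aI 0 = 0 := b0f_zero hβ haI0
      have h3 : 0 ≤ beta0 γh D β aI 0 t := beta0_nonneg hβ hγ 0 t
      simp [betaP, h1, h2, min_eq_left h3]
  · intro r hr
    constructor
    · intro t1 h1 t2 h2 h12
      have hb1 : β r t2 ≤ β r t1 := (hβ.2.1 r hr).1 h1 h2 h12
      have hb2 : beta0 γh D β aI r t2 ≤ beta0 γh D β aI r t1 :=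
        beta0_anti_t hβ hγ hα hD1 r h12
      have hb3 : r * Real.exp (-t2) ≤ r * Real.exp (-t1) :=
        mul_le_mul_of_nonneg_left (Real.exp_le_exp.2 (by linarith)) hr.le
      have hb4 : min (b0f β aI r) (beta0 γh D β aI r t2)
          ≤ min (b0f β aI r) (beta0 γh D β aI r t1) := min_le_min le_rfl hb2
      simp only [betaP]
      linarith
    · have h1 : Tendsto (β r) atTop (nhds 0) := (hβ.2.1 r hr).2
      have h2 : Tendsto (fun t => min (b0f β aI r) (beta0 γh D β aI r t)) atTop (nhds 0) := by
        apply squeeze_zero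
          (fun t => le_min (b0f_nonneg hβ hr.le) (beta0_nonneg hβ hγ r t))
          (fun t => min_le_right _ _)
        exact beta0_tendsto hβ hγ hα hD1 r
      have h3 : Tendsto (fun t => r * Real.exp (-t)) atTop (nhds 0) := by
        have := (Real.tendsto_exp_atBot.comp tendsto_neg_atTop_atBot).const_mul r
        simpa using this
      have := (h1.add h2).add h3
      simp only [add_zero] at this; exact this
  · intro r hr t ht
    have h1 : 0 ≤ β r t := beta_nonneg hβ hr ht
    have h2 : 0 ≤ min (b0f β aI r) (beta0 γh D β aI r t) :=
      le_min (b0f_nonneg hβ hr) (beta0_nonneg hβ hγ r t)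
    have h3 : 0 ≤ r * Real.exp (-t) := by positivity
    simp only [betaP]
    linarith

end INTG
section SCALAR

variable {γh D : ℝ → ℝ} {β : ℝ → ℝ → ℝ} {aI : ℝ → ℝ}

lemma sum_le_max2 {a b : ℝ} : a + b ≤ max (2*a) (2*b) := by
  rcases le_total a b with h | h
  · exact le_trans (by linarith) (le_max_right _ _)
  · exact le_trans (by linarith) (le_max_left _ _)

lemma L1 (hβ : ClassKL β) (hγ : ClassKinf γh)
    (haI4 : ∀ x c : ℝ, 0 ≤ x → abar γh x ≤ c → x ≤ aI c)
    {x : ℝ → ℝ} {t0 T E : ℝ} (hT : t0 ≤ T) (hc : ContinuousOn x (Icc t0 T))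
    (hnn : ∀ t ∈ Icc t0 T, 0 ≤ x t) (hE : 0 ≤ E)
    (Q : ∀ u t', t0 ≤ u → u ≤ t' → t' ≤ T →
      x t' ≤ β (x u) (t' - u) + γh (max E (2 * sSup (x '' Icc u t')))) :
    ∀ t ∈ Icc t0 T, x t ≤ max (b0f β aI (x t0)) (max (E/2) (2 * γh E)) := by
  intro t ht
  have hr0 : 0 ≤ x t0 := hnn t0 ⟨le_rfl, hT⟩
  have hsub : Icc t0 t ⊆ Icc t0 T := Icc_subset_Icc le_rfl ht.2
  have hc' : ContinuousOn x (Icc t0 t) := hc.mono hsub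
  have hne : (Icc t0 t).Nonempty := ⟨t0, left_mem_Icc.2 ht.1⟩
  obtain ⟨s', hs', hXs⟩ := isCompact_Icc.exists_sSup_image_eq hne hc'
  set X := sSup (x '' Icc t0 t) with hXd
  have hbddX : BddAbove (x '' Icc t0 t) := isCompact_Icc.bddAbove_image hc'
  have hxt_le : x t ≤ X := le_csSup hbddX ⟨t, right_mem_Icc.2 ht.1, rfl⟩
  have hX0 : 0 ≤ X := by rw [hXs]; exact hnn s' (hsub hs')
  have hQ := Q t0 s' le_rfl hs'.1 (hs'.2.trans ht.2)
  have hβ1 : β (x t0) (s' - t0) ≤ β (x t0) 0 :=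
    beta_le_beta_zero hβ hr0 (by linarith [hs'.1])
  have hsub2 : x '' Icc t0 s' ⊆ x '' Icc t0 t := image_mono (Icc_subset_Icc le_rfl hs'.2)
  have hS2 : sSup (x '' Icc t0 s') ≤ X :=
    csSup_le_csSup hbddX ⟨x t0, t0, left_mem_Icc.2 hs'.1, rfl⟩ hsub2
  have hS2n : 0 ≤ sSup (x '' Icc t0 s') := by
    apply Real.sSup_nonneg
    rintro - ⟨s, hs, rfl⟩
    exact hnn s (hsub (Icc_subset_Icc le_rfl hs'.2 hs))
  have hγ1 : γh (max E (2 * sSup (x '' Icc t0 s'))) ≤ γh (max E (2*X)) :=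
    gh_mono hγ (le_trans hE (le_max_left _ _)) (max_le_max le_rfl (by linarith))
  have key : X ≤ β (x t0) 0 + γh (max E (2*X)) :=
    calc X = x s' := hXs
      _ ≤ β (x t0) (s' - t0) + γh (max E (2 * sSup (x '' Icc t0 s'))) := hQ
      _ ≤ β (x t0) 0 + γh (max E (2*X)) := add_le_add hβ1 hγ1
  by_cases hcase : 2*X ≤ E
  · rw [max_eq_left hcase] at key
    have h1 : X ≤ max (2 * β (x t0) 0) (2 * γh E) := le_trans key sum_le_max2
    have h2 : 2 * β (x t0) 0 ≤ b0f β aI (x t0) := le_max_right _ _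
    have h3 : (2 : ℝ) * γh E ≤ max (E/2) (2 * γh E) := le_max_right _ _
    calc x t ≤ X := hxt_le
      _ ≤ max (2 * β (x t0) 0) (2 * γh E) := h1
      _ ≤ max (b0f β aI (x t0)) (max (E/2) (2 * γh E)) := max_le_max h2 h3
  · push_neg at hcase
    rw [max_eq_right hcase.le] at key
    have hab : abar γh X ≤ β (x t0) 0 := by
      rw [abar_of_nonneg hX0]
      linarith
    have h1 : X ≤ aI (β (x t0) 0) := haI4 X _ hX0 hab
    have h2 : aI (β (x t0) 0) ≤ b0f β aI (x t0) := le_max_left _ _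
    calc x t ≤ X := hxt_le
      _ ≤ b0f β aI (x t0) := le_trans h1 h2
      _ ≤ _ := le_max_left _ _

lemma L2 (hβ : ClassKL β) (hγ : ClassKinf γh)
    (hα : ClassKinf (fun s => s - γh (2 * s)))
    (haI4 : ∀ x c : ℝ, 0 ≤ x → abar γh x ≤ c → x ≤ aI c)
    (hD1 : ∀ b, 1 ≤ D b) (hD2 : ∀ b, 0 ≤ b → β b (D b) ≤ abar γh b / 2)
    {x : ℝ → ℝ} {t0 T E : ℝ} (hT : t0 ≤ T) (hc : ContinuousOn x (Icc t0 T))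
    (hnn : ∀ t ∈ Icc t0 T, 0 ≤ x t) (hE : 0 ≤ E)
    (Q : ∀ u t', t0 ≤ u → u ≤ t' → t' ≤ T →
      x t' ≤ β (x u) (t' - u) + γh (max E (2 * sSup (x '' Icc u t'))))
    {m : ℝ} (hm : b0f β aI (x t0) ≤ m) :
    ∀ k : ℕ, ∀ t ∈ Icc t0 T, t0 + Tseq γh D m k ≤ t →
      x t ≤ max (bseq γh m k) (max (E/2) (2 * γh E)) := by
  have hr0 : 0 ≤ x t0 := hnn t0 ⟨le_rfl, hT⟩
  have hm0 : 0 ≤ m := le_trans (b0f_nonneg hβ hr0) hm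
  intro k
  induction k with
  | zero =>
    intro t ht _
    have h := L1 hβ hγ haI4 hT hc hnn hE Q t ht
    rw [bseq_zero]
    exact le_trans h (max_le_max hm le_rfl)
  | succ k ih =>
    intro t ht hTk
    by_cases hbk : bseq γh m k ≤ max (E/2) (2 * γh E)
    · have h1 : t0 + Tseq γh D m k ≤ t := le_trans (by linarith [Tseq_le_succ (γh := γh) hD1 m k]) hTk
      have h2 := ih t ht h1
      rw [max_eq_right hbk] at h2
      exact le_trans h2 (le_max_right _ _)
    · push_neg at hbk
      set bk := bseq γh m k with hbkd
      have hbk0 : 0 ≤ bk := bseq_nonneg hγ hm0 k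
      have hDbk := hD1 bk
      set u := t - D bk with hud
      have hut : u ≤ t := by rw [hud]; linarith
      have hu1 : t0 + Tseq γh D m k ≤ u := by
        rw [hud]
        have h := Tseq_succ (γh := γh) (D := D) m k
        linarith [hTk, h]
      have hu0 : t0 ≤ u := le_trans (by linarith [Tseq_nonneg (γh := γh) hD1 m k]) hu1
      have huI : u ∈ Icc t0 T := ⟨hu0, hut.trans ht.2⟩
      have hxu : x u ≤ bk := by
        have h := ih u huI hu1
        rwa [max_eq_left hbk.le] at h
      have hxu0 : 0 ≤ x u := hnn u huI
      have hQ := Q u t hu0 hut ht.2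
      have ht_u : t - u = D bk := by rw [hud]; ring
      have hb1 : β (x u) (t - u) ≤ β bk (D bk) := by
        rw [ht_u]
        exact beta_mono_r hβ (by linarith) hxu0 hxu
      have hb2 : β bk (D bk) ≤ abar γh bk / 2 := hD2 bk hbk0
      have hsup : sSup (x '' Icc u t) ≤ bk := by
        apply Real.sSup_le _ hbk0
        rintro - ⟨s, hs, rfl⟩
        have hsI : s ∈ Icc t0 T := ⟨hu0.trans hs.1, hs.2.trans ht.2⟩
        have h := ih s hsI (le_trans hu1 hs.1)
        rwa [max_eq_left hbk.le] at h
      have hEbk : E ≤ 2 * bk := by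
        have h : E/2 ≤ max (E/2) (2 * γh E) := le_max_left _ _
        linarith
      have harg : max E (2 * sSup (x '' Icc u t)) ≤ 2 * bk := max_le hEbk (by linarith)
      have harg0 : 0 ≤ max E (2 * sSup (x '' Icc u t)) := le_trans hE (le_max_left _ _)
      have hg1 : γh (max E (2 * sSup (x '' Icc u t))) ≤ γh (2*bk) := gh_mono hγ harg0 harg
      have hg2 : γh (2*bk) = bk - abar γh bk := gh_two_eq hγ hbk0
      have hfin : x t ≤ bk - abar γh bk / 2 := by
        have := hQ
        rw [hg2] at hg1
        linarith
      have hstep : bseq γh m (k+1) = bk - abar γh bk / 2 := by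
        rw [bseq_succ]; rfl
      rw [hstep]
      exact le_trans hfin (le_max_left _ _)

lemma Lmain (hβ : ClassKL β) (hγ : ClassKinf γh)
    (hα : ClassKinf (fun s => s - γh (2 * s)))
    (haI4 : ∀ x c : ℝ, 0 ≤ x → abar γh x ≤ c → x ≤ aI c) (haIm : Monotone aI)
    (hD1 : ∀ b, 1 ≤ D b) (hD2 : ∀ b, 0 ≤ b → β b (D b) ≤ abar γh b / 2)
    {x : ℝ → ℝ} {t0 T E : ℝ} (hT : t0 ≤ T) (hc : ContinuousOn x (Icc t0 T))
    (hnn : ∀ t ∈ Icc t0 T, 0 ≤ x t) (hE : 0 ≤ E)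
    (Q : ∀ u t', t0 ≤ u → u ≤ t' → t' ≤ T →
      x t' ≤ β (x u) (t' - u) + γh (max E (2 * sSup (x '' Icc u t')))) :
    x T ≤ betaP γh D β aI (x t0) (T - t0) + gamP γh E := by
  have hr0 : 0 ≤ x t0 := hnn t0 ⟨le_rfl, hT⟩
  have hτ0 : 0 ≤ T - t0 := by linarith
  set r := x t0 with hrd
  set n : ℕ := ⌊r⌋₊ + 1 with hn
  have hrn : r ≤ (n : ℝ) := by rw [hn]; push_cast; exact (Nat.lt_floor_add_one r).le
  set mlev : ℝ := b0f β aI (n : ℝ) with hmd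
  have hb0f_le : b0f β aI r ≤ mlev := b0f_mono hβ haIm hr0 hrn
  have hKle : Tseq γh D mlev (Kf γh D mlev (T - t0)) ≤ T - t0 := Tseq_Kf_le hτ0
  have hL2 := L2 hβ hγ hα haI4 hD1 hD2 hT hc hnn hE Q hb0f_le
    (Kf γh D mlev (T - t0)) T ⟨hT, le_rfl⟩ (by linarith)
  have homf : omf γh D mlev (T - t0) ≤ beta0 γh D β aI r (T - t0) :=
    calc omf γh D mlev (T-t0) ≤ ombar γh D β aI n (T-t0) := omf_le_ombar hD1 n (T-t0)
      _ ≤ ombar γh D β aI (⌊r⌋₊+2) (T-t0) := ombar_mono_n (by omega) _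
      _ ≤ beta0 γh D β aI r (T-t0) := beta0_lb hβ r (T-t0)
  have hL1 := L1 hβ hγ haI4 hT hc hnn hE Q T ⟨hT, le_rfl⟩
  set ρE := max (E/2) (2 * γh E) with hρd
  have hcomb : x T ≤ max (min (b0f β aI r) (beta0 γh D β aI r (T-t0))) ρE := by
    rcases le_total (b0f β aI r) (beta0 γh D β aI r (T-t0)) with h | h
    · rw [min_eq_left h]; exact hL1
    · rw [min_eq_right h]
      refine le_trans hL2 (max_le_max ?_ le_rfl)
      exact homf
  have hmin0 : 0 ≤ min (b0f β aI r) (beta0 γh D β aI r (T-t0)) :=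
    le_min (b0f_nonneg hβ hr0) (beta0_nonneg hβ hγ _ _)
  have hγE := gh_nonneg hγ hE
  have hρ0 : 0 ≤ ρE := le_trans (by linarith) (le_max_left (E/2) (2 * γh E))
  have h1 : x T ≤ min (b0f β aI r) (beta0 γh D β aI r (T-t0)) + ρE :=
    le_trans hcomb (max_le (by linarith) (by linarith))
  have hρ_le : ρE ≤ gamP γh E := by
    rw [hρd]
    apply max_le
    · simp only [gamP]; linarith
    · simp only [gamP]; linarith
  have h3 : 0 ≤ β r (T-t0) := beta_nonneg hβ hr0 hτ0
  have h4 : 0 ≤ r * Real.exp (-(T-t0)) := by positivity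
  have h5 : betaP γh D β aI r (T - t0)
      = β r (T-t0) + min (b0f β aI r) (beta0 γh D β aI r (T-t0)) + r * Real.exp (-(T-t0)) := rfl
  linarith

end SCALAR

/-- Small-gain result (Lemma B.1): if the perturbed reduced order blended dynamics is
δ-ISS with `(β, γ̂)` and `α(s) = s - γ̂(2s)` is class 𝒦_∞, then the perturbed blended
dynamics (with identical internal vector field `Z`) is δ-ISS. -/
theorem stmt12 {N m nz : ℕ} (hN : 0 < N)
    (F : Fin N → ℝ → (Fin m → ℝ) → (Fin nz → ℝ) → (Fin m → ℝ))
    (Z : ℝ → (Fin nz → ℝ) → (Fin m → ℝ) → (Fin nz → ℝ))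
    (β : ℝ → ℝ → ℝ) (γhat : ℝ → ℝ) (hβ : ClassKL β) (hγ : ClassKinf γhat)
    (hα : ClassKinf (fun s => s - γhat (2 * s)))
    -- δ-ISS of the perturbed reduced order blended dynamics:
    (hδISSred : ∀ (t0 : ℝ) (σ σh : ℝ → Fin m → ℝ) (ζ ζh : ℝ → Fin nz → ℝ)
        (e0 eh0 : ℝ → Fin m → ℝ) (e eh : Fin N → ℝ → Fin m → ℝ)
        (d dh : Fin N → ℝ → Fin nz → ℝ),
        (∀ t ≥ t0, HasDerivAt σ ((N : ℝ)⁻¹ • ∑ i, F i t (σ t + e i t) (ζ t + d i t)) t) →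
        (∀ t ≥ t0, HasDerivAt ζ (Z t (ζ t) (σ t + e0 t)) t) →
        (∀ t ≥ t0, HasDerivAt σh
            ((N : ℝ)⁻¹ • ∑ i, F i t (σh t + eh i t) (ζh t + dh i t)) t) →
        (∀ t ≥ t0, HasDerivAt ζh (Z t (ζh t) (σh t + eh0 t)) t) →
        ∀ t ≥ t0, ‖(σh t, ζh t) - (σ t, ζ t)‖ ≤
          β ‖(σh t0, ζh t0) - (σ t0, ζ t0)‖ (t - t0) +
          γhat (sSup {r | ∃ s ∈ Set.Ico t0 t,
            r = ‖eh0 s - e0 s‖ ∨ (∃ i, r = ‖eh i s - e i s‖) ∨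
              ∃ i, r = ‖dh i s - d i s‖})) :
    -- then the perturbed blended dynamics is δ-ISS:
    ∃ (β' : ℝ → ℝ → ℝ) (γ' : ℝ → ℝ), ClassKL β' ∧ ClassKinf γ' ∧
      ∀ (t0 : ℝ) (σ σh : ℝ → Fin m → ℝ) (ζ ζh : Fin N → ℝ → Fin nz → ℝ)
        (e eh : Fin N → ℝ → Fin m → ℝ),
        (∀ t ≥ t0, HasDerivAt σ ((N : ℝ)⁻¹ • ∑ i, F i t (σ t + e i t) (ζ i t)) t) →
        (∀ i, ∀ t ≥ t0, HasDerivAt (ζ i) (Z t (ζ i t) (σ t + e i t)) t) →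
        (∀ t ≥ t0, HasDerivAt σh ((N : ℝ)⁻¹ • ∑ i, F i t (σh t + eh i t) (ζh i t)) t) →
        (∀ i, ∀ t ≥ t0, HasDerivAt (ζh i) (Z t (ζh i t) (σh t + eh i t)) t) →
        ∀ t ≥ t0, ‖(σh t, fun i => ζh i t) - (σ t, fun i => ζ i t)‖ ≤
          β' ‖(σh t0, fun i => ζh i t0) - (σ t0, fun i => ζ i t0)‖ (t - t0) +
          γ' (sSup {r | ∃ s ∈ Set.Ico t0 t, ∃ i, r = ‖eh i s - e i s‖}) := by
  obtain ⟨aI, haIm, haIc, haI0, haI4⟩ := exists_aI hγ hα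
  obtain ⟨D, hD1, hD2⟩ := exists_D hβ hγ hα
  refine ⟨betaP γhat D β aI, gamP γhat,
    betaP_classKL hβ hγ hα hD1 haIm haIc haI0, gamP_classKinf hγ, ?_⟩
  intro t0 σ σh ζ ζh e eh hσ hζ hσh hζh t ht
  set x : ℝ → ℝ := fun s => ‖(σh s, fun i => ζh i s) - (σ s, fun i => ζ i s)‖ with hxd
  have i0 : Fin N := ⟨0, hN⟩
  -- norm helpers
  have hxmax : ∀ s : ℝ, x s = max ‖σh s - σ s‖ ‖(fun i => ζh i s) - (fun i => ζ i s)‖ := by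
    intro s
    rw [hxd]
    simp [Prod.norm_def]
  have hximax : ∀ (i : Fin N) (s : ℝ),
      ‖(σh s, ζh i s) - (σ s, ζ i s)‖ = max ‖σh s - σ s‖ ‖ζh i s - ζ i s‖ := by
    intro i s
    simp [Prod.norm_def]
  have hxi_le : ∀ (i : Fin N) (s : ℝ), max ‖σh s - σ s‖ ‖ζh i s - ζ i s‖ ≤ x s := by
    intro i s
    rw [hxmax s]
    refine max_le_max le_rfl ?_
    simpa using norm_le_pi_norm ((fun j => ζh j s) - fun j => ζ j s) i
  have hζ_le : ∀ (j : Fin N) (s : ℝ), ‖ζh j s - ζ j s‖ ≤ x s :=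
    fun j s => le_trans (le_max_right _ _) (hxi_le j s)
  have hxnn : ∀ s ∈ Icc t0 t, 0 ≤ x s := fun s _ => norm_nonneg _
  -- continuity of x on [t0, t]
  have hxc : ContinuousOn x (Icc t0 t) := by
    intro s hs
    have hσc : ContinuousAt σ s := (hσ s hs.1).continuousAt
    have hσhc : ContinuousAt σh s := (hσh s hs.1).continuousAt
    have hζc : ContinuousAt (fun s' => fun i => ζ i s') s :=
      continuousAt_pi.2 fun i => (hζ i s hs.1).continuousAt
    have hζhc : ContinuousAt (fun s' => fun i => ζh i s') s :=
      continuousAt_pi.2 fun i => (hζh i s hs.1).continuousAt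
    exact (((hσhc.prodMk hζhc).sub (hσc.prodMk hζc)).norm).continuousWithinAt
  -- main reduced-order estimate, for each i and each restart time u
  have key : ∀ (i : Fin N) (u t' : ℝ), t0 ≤ u → u ≤ t' →
      ‖(σh t', ζh i t') - (σ t', ζ i t')‖ ≤
        β ‖(σh u, ζh i u) - (σ u, ζ i u)‖ (t' - u) +
        γhat (sSup {ρ : ℝ | ∃ s ∈ Set.Ico u t',
          ρ = ‖eh i s - e i s‖ ∨ (∃ j, ρ = ‖eh j s - e j s‖) ∨
            ∃ j, ρ = ‖(ζh j s - ζh i s) - (ζ j s - ζ i s)‖}) := by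
    intro i u t' hu hut'
    have harg : ∀ (w : Fin N → ℝ → Fin nz → ℝ) (j : Fin N) (s : ℝ),
        w i s + (w j s - w i s) = w j s := fun w j s => by abel
    have h := hδISSred u σ σh (ζ i) (ζh i) (e i) (eh i) e eh
      (fun j s => ζ j s - ζ i s) (fun j s => ζh j s - ζh i s)
      (fun s hs => by
        have h1 := hσ s (le_trans hu hs)
        simp only [harg ζ]
        exact h1)
      (fun s hs => hζ i s (le_trans hu hs))
      (fun s hs => by
        have h1 := hσh s (le_trans hu hs)
        simp only [harg ζh]
        exact h1)
      (fun s hs => hζh i s (le_trans hu hs))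
      t' hut'
    exact h
  show x t ≤ betaP γhat D β aI (x t0) (t - t0) +
    gamP γhat (sSup {ρ : ℝ | ∃ s ∈ Set.Ico t0 t, ∃ i, ρ = ‖eh i s - e i s‖})
  by_cases hbdd : BddAbove {ρ : ℝ | ∃ s ∈ Set.Ico t0 t, ∃ i, ρ = ‖eh i s - e i s‖}
  · -- bounded inputs case
    set E := sSup {ρ : ℝ | ∃ s ∈ Set.Ico t0 t, ∃ i, ρ = ‖eh i s - e i s‖} with hEd
    have hE0 : 0 ≤ E := by
      apply Real.sSup_nonneg
      rintro ρ ⟨s, hs, i, rfl⟩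
      exact norm_nonneg _
    have Q : ∀ u t', t0 ≤ u → u ≤ t' → t' ≤ t →
        x t' ≤ β (x u) (t' - u) + γhat (max E (2 * sSup (x '' Icc u t'))) := by
      intro u t' hu hut' ht'
      have hsubI : Icc u t' ⊆ Icc t0 t := Icc_subset_Icc hu ht'
      have hbddX : BddAbove (x '' Icc u t') :=
        isCompact_Icc.bddAbove_image (hxc.mono hsubI)
      have hXnn : 0 ≤ sSup (x '' Icc u t') := by
        apply Real.sSup_nonneg
        rintro - ⟨s, hs, rfl⟩
        exact norm_nonneg _
      have hRHS0 : 0 ≤ β (x u) (t' - u) + γhat (max E (2 * sSup (x '' Icc u t'))) :=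
        add_nonneg (beta_nonneg hβ (norm_nonneg _) (by linarith))
          (gh_nonneg hγ (le_trans hE0 (le_max_left _ _)))
      have hper : ∀ i : Fin N, ‖(σh t', ζh i t') - (σ t', ζ i t')‖ ≤
          β (x u) (t' - u) + γhat (max E (2 * sSup (x '' Icc u t'))) := by
        intro i
        have h1 := key i u t' hu hut'
        have h2 : β ‖(σh u, ζh i u) - (σ u, ζ i u)‖ (t' - u) ≤ β (x u) (t' - u) := by
          apply beta_mono_r hβ (by linarith) (norm_nonneg _)
          rw [hximax i u]
          exact hxi_le i u
        have h3 : sSup {ρ : ℝ | ∃ s ∈ Set.Ico u t',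
            ρ = ‖eh i s - e i s‖ ∨ (∃ j, ρ = ‖eh j s - e j s‖) ∨
              ∃ j, ρ = ‖(ζh j s - ζh i s) - (ζ j s - ζ i s)‖}
            ≤ max E (2 * sSup (x '' Icc u t')) := by
          apply Real.sSup_le _ (le_trans hE0 (le_max_left _ _))
          rintro ρ ⟨s, hs, hcase⟩
          have hsC : s ∈ Set.Ico t0 t := ⟨le_trans hu hs.1, lt_of_lt_of_le hs.2 ht'⟩
          rcases hcase with h | ⟨j, h⟩ | ⟨j, h⟩
          · exact le_trans (le_csSup hbdd ⟨s, hsC, i, h⟩) (le_max_left _ _)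
          · exact le_trans (le_csSup hbdd ⟨s, hsC, j, h⟩) (le_max_left _ _)
          · have heq : (ζh j s - ζh i s) - (ζ j s - ζ i s)
                = (ζh j s - ζ j s) - (ζh i s - ζ i s) := by abel
            rw [h, heq]
            have hb : ‖(ζh j s - ζ j s) - (ζh i s - ζ i s)‖
                ≤ ‖ζh j s - ζ j s‖ + ‖ζh i s - ζ i s‖ := norm_sub_le _ _
            have h2x : x s ≤ sSup (x '' Icc u t') :=
              le_csSup hbddX ⟨s, ⟨hs.1, hs.2.le⟩, rfl⟩
            have hj := hζ_le j s
            have hi := hζ_le i s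
            refine le_trans ?_ (le_max_right _ _)
            linarith
        have hSnn : 0 ≤ sSup {ρ : ℝ | ∃ s ∈ Set.Ico u t',
            ρ = ‖eh i s - e i s‖ ∨ (∃ j, ρ = ‖eh j s - e j s‖) ∨
              ∃ j, ρ = ‖(ζh j s - ζh i s) - (ζ j s - ζ i s)‖} := by
          apply Real.sSup_nonneg
          rintro ρ ⟨s, hs, hcase⟩
          rcases hcase with h | ⟨j, h⟩ | ⟨j, h⟩ <;> rw [h] <;> exact norm_nonneg _
        have h4 := gh_mono hγ hSnn h3
        linarith
      rw [hxmax t']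
      apply max_le
      · have hp := hper i0
        rw [hximax i0 t'] at hp
        exact le_trans (le_max_left _ _) hp
      · rw [pi_norm_le_iff_of_nonneg hRHS0]
        intro j
        have hp := hper j
        rw [hximax j t'] at hp
        simp only [Pi.sub_apply]
        exact le_trans (le_max_right _ _) hp
    exact Lmain hβ hγ hα haI4 haIm hD1 hD2 ht hxc hxnn hE0 Q
  · -- unbounded inputs case
    have hnb : ∀ i : Fin N, ¬ BddAbove {ρ : ℝ | ∃ s ∈ Set.Ico t0 t,
        ρ = ‖eh i s - e i s‖ ∨ (∃ j, ρ = ‖eh j s - e j s‖) ∨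
          ∃ j, ρ = ‖(ζh j s - ζh i s) - (ζ j s - ζ i s)‖} := by
      intro i hb
      apply hbdd
      apply hb.mono
      rintro ρ ⟨s, hs, j, h⟩
      exact ⟨s, hs, Or.inr (Or.inl ⟨j, h⟩)⟩
    have hτ0 : 0 ≤ t - t0 := by linarith
    have hper : ∀ i : Fin N, ‖(σh t, ζh i t) - (σ t, ζ i t)‖ ≤ β (x t0) (t - t0) := by
      intro i
      have h1 := key i t0 t le_rfl ht
      rw [Real.sSup_of_not_bddAbove (hnb i), gh_zero hγ, add_zero] at h1
      have h2 : β ‖(σh t0, ζh i t0) - (σ t0, ζ i t0)‖ (t - t0) ≤ β (x t0) (t - t0) := by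
        apply beta_mono_r hβ hτ0 (norm_nonneg _)
        rw [hximax i t0]
        exact hxi_le i t0
      exact le_trans h1 h2
    have hβ0 : 0 ≤ β (x t0) (t - t0) := beta_nonneg hβ (norm_nonneg _) hτ0
    have hxt : x t ≤ β (x t0) (t - t0) := by
      rw [hxmax t]
      apply max_le
      · have hp := hper i0
        rw [hximax i0 t] at hp
        exact le_trans (le_max_left _ _) hp
      · rw [pi_norm_le_iff_of_nonneg hβ0]
        intro j
        have hp := hper j
        rw [hximax j t] at hp
        simp only [Pi.sub_apply]
        exact le_trans (le_max_right _ _) hp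
    rw [Real.sSup_of_not_bddAbove hbdd, gamP_zero hγ, add_zero]
    have hmin0 : 0 ≤ min (b0f β aI (x t0)) (beta0 γhat D β aI (x t0) (t - t0)) :=
      le_min (b0f_nonneg hβ (norm_nonneg _)) (beta0_nonneg hβ hγ _ _)
    have hexp0 : 0 ≤ x t0 * Real.exp (-(t - t0)) := by positivity
    have hP : betaP γhat D β aI (x t0) (t - t0) = β (x t0) (t - t0)
        + min (b0f β aI (x t0)) (beta0 γhat D β aI (x t0) (t - t0))
        + x t0 * Real.exp (-(t - t0)) := rfl
    linarith
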